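/- Fix integers n ≥ 1, r ≥ 1, s ≥ 0. Let A_1,…,A_r and Ω_0,…,Ω_s be n×n matrices with entries in ℂ[[Q^1,…,Q^r,t^0,…,t^s]] (in particular independent of ħ) such that the operators ∇^a := ħ Q^a ∂/∂Q^a + A_a and ∇_i := ħ ∂/∂t^i + Ω_i pairwise commute. Then the unique fundamental solution L ∈ M_n(ℂ((ħ^{-1}))[[Q,t]]) (satisfying ħ ∂L/∂t^i + Ω_i L = 0, ħ Q^a ∂L/∂Q^a + A_a L − L p_a = 0 with p_a := A_a|_{Q=t=0}, and L|_{Q=t=0} = Id_n) satisfies L − Id_n ∈ ħ^{-1} M_n(ℂ[[ħ^{-1}]][[Q,t]]); that is, L = Id + O(ħ^{-1}), with no positive powers of ħ occurring. -/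

import Mathlib

noncomputable section

/-- `ℂ((ħ⁻¹))`, realized as formal Laurent series (Hahn series over `ℤ`) in the
variable `X = ħ⁻¹`; the coefficient of `ħ^k` is the coefficient at `z = -k`. -/
abbrev LH : Type := LaurentSeries ℂ

/-- The element `ħ = X⁻¹`: the Hahn series with single coefficient `1` in degree `-1`. -/
def hbar : LH := HahnSeries.single (-1 : ℤ) 1

/-- `f` lies in the subring `ℂ[ħ]` (no positive powers of the variable `X = ħ⁻¹`). -/
def InPolyH (f : LH) : Prop := ∀ z : ℤ, 0 < z → f.coeff z = 0

/-- `f` lies in the subring `ℂ[[ħ⁻¹]]`. -/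
def InPSinv (f : LH) : Prop := ∀ z : ℤ, z < 0 → f.coeff z = 0

/-- `f` lies in `ħ⁻¹ · ℂ[[ħ⁻¹]]` (only strictly negative powers of `ħ`). -/
def InPSinvPos (f : LH) : Prop := ∀ z : ℤ, z ≤ 0 → f.coeff z = 0

/-- `f` is a constant (a complex scalar), i.e. independent of `ħ`. -/
def IsConstL (f : LH) : Prop := ∀ z : ℤ, z ≠ 0 → f.coeff z = 0

section ops

variable {σ R : Type} [CommRing R] {n : ℕ}

/-- Formal partial derivative `∂/∂x` on multivariate formal power series. -/
def pd (x : σ) (f : MvPowerSeries σ R) : MvPowerSeries σ R :=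
  fun d => ((d x + 1 : ℕ) : R) * MvPowerSeries.coeff (R := R) (d + Finsupp.single x 1) f

/-- Euler derivative `x·∂/∂x` on multivariate formal power series. -/
def eulerD (x : σ) (f : MvPowerSeries σ R) : MvPowerSeries σ R :=
  fun d => ((d x : ℕ) : R) * MvPowerSeries.coeff (R := R) d f

/-- Entrywise partial derivative of a matrix of power series. -/
def mpd (x : σ) (M : Matrix (Fin n) (Fin n) (MvPowerSeries σ R)) :
    Matrix (Fin n) (Fin n) (MvPowerSeries σ R) := M.map (pd x)

/-- Entrywise Euler derivative of a matrix of power series. -/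
def meu (x : σ) (M : Matrix (Fin n) (Fin n) (MvPowerSeries σ R)) :
    Matrix (Fin n) (Fin n) (MvPowerSeries σ R) := M.map (eulerD x)

/-- A constant matrix, viewed as a matrix of power series. -/
def mC (M : Matrix (Fin n) (Fin n) R) : Matrix (Fin n) (Fin n) (MvPowerSeries σ R) :=
  M.map (MvPowerSeries.C (σ := σ) (R := R))

/-- Constant term (restriction to `Q = t = 0`) of a matrix of power series. -/
def m0 (M : Matrix (Fin n) (Fin n) (MvPowerSeries σ R)) : Matrix (Fin n) (Fin n) R :=
  M.map (MvPowerSeries.constantCoeff (σ := σ) (R := R))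

end ops

section lops

variable {σ : Type} {n : ℕ}

/-- The scalar `ħ` inside `ℂ((ħ⁻¹))[[Q,t]]`. -/
def hbarC (σ : Type) : MvPowerSeries σ LH := MvPowerSeries.C (σ := σ) (R := LH) hbar

/-- The entries of the matrix `M` lie in `ℂ[ħ][[Q,t]]`. -/
def MatPolyH (M : Matrix (Fin n) (Fin n) (MvPowerSeries σ LH)) : Prop :=
  ∀ (i j : Fin n) (d : σ →₀ ℕ), InPolyH (MvPowerSeries.coeff (R := LH) d (M i j))

/-- The entries of the matrix `M` lie in `ℂ[[Q,t]]`, i.e. are independent of `ħ`. -/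
def MatNoH (M : Matrix (Fin n) (Fin n) (MvPowerSeries σ LH)) : Prop :=
  ∀ (i j : Fin n) (d : σ →₀ ℕ), IsConstL (MvPowerSeries.coeff (R := LH) d (M i j))

/-- The first-order operator `v ↦ ħ·(x ∂/∂x)v + A·v` on column vectors. -/
def nablaE (x : σ) (A : Matrix (Fin n) (Fin n) (MvPowerSeries σ LH))
    (v : Fin n → MvPowerSeries σ LH) : Fin n → MvPowerSeries σ LH :=
  fun i => hbarC σ * eulerD x (v i) + A.mulVec v i

/-- The first-order operator `v ↦ ħ·(∂/∂x)v + A·v` on column vectors. -/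
def nablaP (x : σ) (A : Matrix (Fin n) (Fin n) (MvPowerSeries σ LH))
    (v : Fin n → MvPowerSeries σ LH) : Fin n → MvPowerSeries σ LH :=
  fun i => hbarC σ * pd x (v i) + A.mulVec v i

end lops


lemma hs_coeff_sum {α : Type*} (s : Finset α) (f : α → LH) (z : ℤ) :
    (∑ a ∈ s, f a).coeff z = ∑ a ∈ s, (f a).coeff z :=
  map_sum (HahnSeries.coeff.addMonoidHom z) f s

lemma constL_eq {g : LH} (hg : IsConstL g) : g = HahnSeries.single 0 (g.coeff 0) := by
  ext w
  by_cases hw : w = 0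
  · simp [hw]
  · rw [hg w hw, HahnSeries.coeff_single_of_ne hw]

lemma constL_mul_coeff {g : LH} (hg : IsConstL g) (f : LH) (z : ℤ) :
    (g * f).coeff z = g.coeff 0 * f.coeff z := by
  conv_lhs => rw [constL_eq hg]
  rw [HahnSeries.coeff_single_zero_mul]

lemma mul_constL_coeff {g : LH} (hg : IsConstL g) (f : LH) (z : ℤ) :
    (f * g).coeff z = f.coeff z * g.coeff 0 := by
  conv_lhs => rw [constL_eq hg]
  rw [HahnSeries.coeff_mul_single_zero]

lemma hbar_mul_coeff (f : LH) (z : ℤ) : (hbar * f).coeff z = f.coeff (z + 1) := by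
  have h := HahnSeries.coeff_single_mul_add (r := (1 : ℂ)) (x := f) (a := z + 1) (b := (-1 : ℤ))
  simpa [hbar] using h

lemma natCast_LH (m : ℕ) : ((m : LH)) = HahnSeries.single 0 (m : ℂ) := by
  rw [← map_natCast (HahnSeries.C : ℂ →+* LH) m]
  rfl

lemma natCast_mul_coeff (m : ℕ) (f : LH) (z : ℤ) :
    (((m : ℕ) : LH) * f).coeff z = (m : ℂ) * f.coeff z := by
  rw [natCast_LH, HahnSeries.coeff_single_zero_mul]

lemma one_coeff_LH (w : ℤ) : (1 : LH).coeff w = if w = 0 then 1 else 0 := by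
  rw [show (1 : LH) = HahnSeries.single 0 1 from rfl, HahnSeries.coeff_single]
  split <;> rfl

def deg {σ : Type} (d : σ →₀ ℕ) : ℕ := d.sum fun _ k => k

lemma deg_add {σ : Type} (d e : σ →₀ ℕ) : deg (d + e) = deg d + deg e :=
  Finsupp.sum_add_index' (fun _ => rfl) (fun _ _ _ => rfl)

lemma deg_eq_zero {σ : Type} {d : σ →₀ ℕ} (h : deg d = 0) : d = 0 := by
  ext x
  simp only [Finsupp.coe_zero, Pi.zero_apply]
  by_cases hx : x ∈ d.support
  · exact (Finset.sum_eq_zero_iff.mp h) x hx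
  · exact Finsupp.notMem_support_iff.mp hx

lemma deg_single {σ : Type} (x : σ) : deg (Finsupp.single x (1 : ℕ)) = 1 := by
  simp [deg, Finsupp.sum_single_index]

lemma one_le_deg {σ : Type} {d : σ →₀ ℕ} (h : d ≠ 0) : 1 ≤ deg d := by
  rcases Nat.eq_zero_or_pos (deg d) with h0 | h0
  · exact absurd (deg_eq_zero h0) h
  · exact h0

/-- the fundamental solution of a canonical frame has the form
`Id + O(ħ⁻¹)`, with no positive `ħ`-powers. -/
theorem statement1 (n r s : ℕ) (hn : 1 ≤ n) (hr : 1 ≤ r)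
    (A : Fin r → Matrix (Fin n) (Fin n) (MvPowerSeries (Fin r ⊕ Fin (s + 1)) LH))
    (Ω : Fin (s + 1) → Matrix (Fin n) (Fin n) (MvPowerSeries (Fin r ⊕ Fin (s + 1)) LH))
    -- the connection matrices have entries in `ℂ[[Q,t]]`, i.e. are independent of `ħ`
    (hA : ∀ a, MatNoH (A a)) (hΩ : ∀ i, MatNoH (Ω i))
    -- the operators `∇^a = ħ Q^a ∂/∂Q^a + A_a`, `∇_i = ħ ∂/∂t^i + Ω_i` pairwise commute
    (hQQ : ∀ a b v, nablaE (Sum.inl a) (A a) (nablaE (Sum.inl b) (A b) v)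
         = nablaE (Sum.inl b) (A b) (nablaE (Sum.inl a) (A a) v))
    (hQT : ∀ a i v, nablaE (Sum.inl a) (A a) (nablaP (Sum.inr i) (Ω i) v)
         = nablaP (Sum.inr i) (Ω i) (nablaE (Sum.inl a) (A a) v))
    (hTT : ∀ i j v, nablaP (Sum.inr i) (Ω i) (nablaP (Sum.inr j) (Ω j) v)
         = nablaP (Sum.inr j) (Ω j) (nablaP (Sum.inr i) (Ω i) v))
    -- `L` is the (unique) normalized fundamental solution
    (L : Matrix (Fin n) (Fin n) (MvPowerSeries (Fin r ⊕ Fin (s + 1)) LH))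
    (hLt : ∀ i, hbarC (Fin r ⊕ Fin (s + 1)) • mpd (Sum.inr i) L + Ω i * L = 0)
    (hLq : ∀ a, hbarC (Fin r ⊕ Fin (s + 1)) • meu (Sum.inl a) L + A a * L
                  - L * mC (m0 (A a)) = 0)
    (hL0 : m0 L = 1) :
    -- `L - Id ∈ ħ⁻¹ · M_n(ℂ[[ħ⁻¹]][[Q,t]])`
    ∀ (i j : Fin n) (d : (Fin r ⊕ Fin (s + 1)) →₀ ℕ),
      InPSinvPos (MvPowerSeries.coeff (R := LH) d ((L - 1) i j)) := by
  classical
  have hL00 : ∀ i j : Fin n, MvPowerSeries.coeff (R := LH) 0 (L i j)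
      = if i = j then (1 : LH) else 0 := by
    intro i j
    have h := congrFun (congrFun hL0 i) j
    simp only [m0, Matrix.map_apply, Matrix.one_apply] at h
    rw [MvPowerSeries.coeff_zero_eq_constantCoeff_apply, h]
  -- scalar form of the t-equations
  have Ht : ∀ (i0 : Fin (s + 1)) (d : (Fin r ⊕ Fin (s + 1)) →₀ ℕ) (i j : Fin n) (w : ℤ),
      ((d (Sum.inr i0) + 1 : ℕ) : ℂ) *
        (MvPowerSeries.coeff (R := LH) (d + Finsupp.single (Sum.inr i0) 1) (L i j)).coeff (w + 1)
      + ∑ k : Fin n, ∑ p ∈ Finset.HasAntidiagonal.antidiagonal d,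
          (MvPowerSeries.coeff (R := LH) p.1 (Ω i0 i k)).coeff 0 *
            (MvPowerSeries.coeff (R := LH) p.2 (L k j)).coeff w = 0 := by
    intro i0 d i j w
    have h0 := congrFun (congrFun (hLt i0) i) j
    simp only [Matrix.add_apply, Matrix.smul_apply, Matrix.mul_apply, mpd, Matrix.map_apply,
      Matrix.zero_apply, smul_eq_mul] at h0
    have h1 := congrArg (MvPowerSeries.coeff (R := LH) d) h0
    rw [map_add, map_sum, map_zero] at h1
    have e1 : MvPowerSeries.coeff (R := LH) d (hbarC _ * pd (Sum.inr i0) (L i j))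
        = hbar * (((d (Sum.inr i0) + 1 : ℕ) : LH) *
            MvPowerSeries.coeff (R := LH) (d + Finsupp.single (Sum.inr i0) 1) (L i j)) := by
      rw [hbarC, MvPowerSeries.coeff_C_mul]; rfl
    rw [e1] at h1
    simp only [MvPowerSeries.coeff_mul] at h1
    have h2 := congrArg (fun f : LH => f.coeff w) h1
    simp only [HahnSeries.coeff_add, hs_coeff_sum, HahnSeries.coeff_zero,
      hbar_mul_coeff, natCast_mul_coeff] at h2
    rw [Finset.sum_congr rfl (fun k _ => Finset.sum_congr rfl
      (fun p _ => constL_mul_coeff (hΩ i0 i k p.1) _ w))] at h2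
    exact h2
  -- scalar form of the Q-equations
  have Hq : ∀ (a : Fin r) (d : (Fin r ⊕ Fin (s + 1)) →₀ ℕ) (i j : Fin n) (w : ℤ),
      ((d (Sum.inl a) : ℕ) : ℂ) * (MvPowerSeries.coeff (R := LH) d (L i j)).coeff (w + 1)
      + ∑ k : Fin n, ∑ p ∈ Finset.HasAntidiagonal.antidiagonal d,
          (MvPowerSeries.coeff (R := LH) p.1 (A a i k)).coeff 0 *
            (MvPowerSeries.coeff (R := LH) p.2 (L k j)).coeff w
      - ∑ k : Fin n, (MvPowerSeries.coeff (R := LH) d (L i k)).coeff w *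
          (MvPowerSeries.constantCoeff (R := LH) (A a k j)).coeff 0 = 0 := by
    intro a d i j w
    have h0 := congrFun (congrFun (hLq a) i) j
    simp only [Matrix.sub_apply, Matrix.add_apply, Matrix.smul_apply, Matrix.mul_apply, meu,
      mC, m0, Matrix.map_apply, Matrix.zero_apply, smul_eq_mul] at h0
    have h1 := congrArg (MvPowerSeries.coeff (R := LH) d) h0
    rw [map_sub, map_add, map_sum, map_sum, map_zero] at h1
    have e1 : MvPowerSeries.coeff (R := LH) d (hbarC _ * eulerD (Sum.inl a) (L i j))
        = hbar * (((d (Sum.inl a) : ℕ) : LH) * MvPowerSeries.coeff (R := LH) d (L i j)) := by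
      rw [hbarC, MvPowerSeries.coeff_C_mul]; rfl
    rw [e1] at h1
    rw [Finset.sum_congr rfl (fun k (_ : k ∈ Finset.univ) =>
      MvPowerSeries.coeff_mul_C d (L i k) (MvPowerSeries.constantCoeff (R := LH) (A a k j)))] at h1
    simp only [MvPowerSeries.coeff_mul] at h1
    have h2 := congrArg (fun f : LH => f.coeff w) h1
    simp only [HahnSeries.coeff_sub, HahnSeries.coeff_add, hs_coeff_sum, HahnSeries.coeff_zero,
      hbar_mul_coeff, natCast_mul_coeff] at h2
    rw [Finset.sum_congr rfl (fun k _ => Finset.sum_congr rfl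
      (fun p _ => constL_mul_coeff (hA a i k p.1) _ w))] at h2
    rw [Finset.sum_congr rfl (fun k (_ : k ∈ Finset.univ) => mul_constL_coeff
      (by rw [← MvPowerSeries.coeff_zero_eq_constantCoeff_apply]; exact hA a k j 0)
      (MvPowerSeries.coeff (R := LH) d (L i k)) w)] at h2
    exact h2
  -- the main induction on total degree
  have KEY : ∀ m : ℕ, ∀ d : (Fin r ⊕ Fin (s + 1)) →₀ ℕ, deg d = m → d ≠ 0 →
      ∀ (i j : Fin n) (w : ℤ), w ≤ 0 → (MvPowerSeries.coeff (R := LH) d (L i j)).coeff w = 0 := by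
    intro m
    induction m using Nat.strong_induction_on with
    | _ m IH =>
    intro d hdm hd0 i j w hw
    -- inductive bound: all strictly smaller degrees give `ℂ[[ħ⁻¹]]` entries
    have hPS : ∀ d' : (Fin r ⊕ Fin (s + 1)) →₀ ℕ, deg d' < m →
        ∀ (k l : Fin n) (w' : ℤ), w' < 0 →
        (MvPowerSeries.coeff (R := LH) d' (L k l)).coeff w' = 0 := by
      intro d' hd' k l w' hw'
      by_cases h0 : d' = 0
      · subst h0
        rw [hL00]
        split
        · rw [one_coeff_LH, if_neg hw'.ne]
        · rfl
      · exact IH (deg d') (hdm ▸ hd') d' rfl h0 k l w' hw'.le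
    by_cases ht : ∃ i0 : Fin (s + 1), d (Sum.inr i0) ≠ 0
    · -- t-direction case
      obtain ⟨i0, hi0⟩ := ht
      set e : (Fin r ⊕ Fin (s + 1)) →₀ ℕ := Finsupp.single (Sum.inr i0) 1 with he
      have hle : e ≤ d := by
        rw [he, Finsupp.single_le_iff]
        omega
      set d' : (Fin r ⊕ Fin (s + 1)) →₀ ℕ := d - e with hd'
      have hde : d' + e = d := tsub_add_cancel_of_le hle
      have hdeg' : deg d' < m := by
        have := deg_add d' e
        rw [hde, he, deg_single] at this
        omega
      have h := Ht i0 d' i j (w - 1)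
      rw [hde, sub_add_cancel] at h
      have hz : ∑ k : Fin n, ∑ p ∈ Finset.HasAntidiagonal.antidiagonal d',
          (MvPowerSeries.coeff (R := LH) p.1 (Ω i0 i k)).coeff 0 *
            (MvPowerSeries.coeff (R := LH) p.2 (L k j)).coeff (w - 1) = 0 := by
        refine Finset.sum_eq_zero fun k _ => Finset.sum_eq_zero fun p hp => ?_
        have hp2 : deg p.2 < m := by
          have : p.1 + p.2 = d' := Finset.HasAntidiagonal.mem_antidiagonal.mp hp
          have h1 : deg p.1 + deg p.2 = deg d' := by rw [← deg_add, this]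
          omega
        rw [hPS p.2 hp2 k j (w - 1) (by omega), mul_zero]
      rw [hz, add_zero] at h
      have hcne : ((d' (Sum.inr i0) + 1 : ℕ) : ℂ) ≠ 0 :=
        Nat.cast_ne_zero.mpr (Nat.succ_ne_zero _)
      exact (mul_eq_zero.mp h).resolve_left hcne
    · -- Q-direction case
      push_neg at ht
      obtain ⟨a, ha⟩ : ∃ a : Fin r, d (Sum.inl a) ≠ 0 := by
        by_contra hc
        push_neg at hc
        apply hd0
        ext x
        cases x with
        | inl a => exact hc a
        | inr i0 => exact ht i0
      -- the matrix M := L_d; show its coefficients vanish for w ≤ 0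
      -- lower bound on supports
      obtain ⟨N, hN⟩ : ∃ N : ℤ, ∀ k l : Fin n,
          ∀ w' : ℤ, w' < N → (MvPowerSeries.coeff (R := LH) d (L k l)).coeff w' = 0 := by
        obtain ⟨M, hM⟩ := Finite.exists_le
          (fun p : Fin n × Fin n => -(MvPowerSeries.coeff (R := LH) d (L p.1 p.2)).order)
        refine ⟨-M, fun k l w' hw' => ?_⟩
        apply HahnSeries.coeff_eq_zero_of_lt_order
        have h2 : -(MvPowerSeries.coeff (R := LH) d (L k l)).order ≤ M := hM (k, l)
        omega
      -- the recurrence at each w' < 0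
      have hrec : ∀ w' : ℤ, w' < 0 →
          (∀ k l : Fin n, (MvPowerSeries.coeff (R := LH) d (L k l)).coeff w' = 0) →
          ∀ k l : Fin n, (MvPowerSeries.coeff (R := LH) d (L k l)).coeff (w' + 1) = 0 := by
        intro w' hw' hzero k l
        have h := Hq a d k l w'
        have hsplit : ∀ k' : Fin n, ∑ p ∈ Finset.HasAntidiagonal.antidiagonal d,
            (MvPowerSeries.coeff (R := LH) p.1 (A a k k')).coeff 0 *
              (MvPowerSeries.coeff (R := LH) p.2 (L k' l)).coeff w' = 0 := by
          intro k'
          refine Finset.sum_eq_zero fun p hp => ?_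
          rcases eq_or_ne p (0, d) with rfl | hpne
          · rw [hzero k' l, mul_zero]
          · have hsum : p.1 + p.2 = d := Finset.HasAntidiagonal.mem_antidiagonal.mp hp
            have hp1 : p.1 ≠ 0 := by
              intro hp1
              apply hpne
              rw [Prod.ext_iff]
              refine ⟨hp1, ?_⟩
              rw [hp1, zero_add] at hsum
              exact hsum
            have hdsum : deg p.1 + deg p.2 = m := by rw [← deg_add, hsum, hdm]
            have : deg p.2 < m := by
              have := one_le_deg hp1
              omega
            rw [hPS p.2 this k' l w' hw', mul_zero]
        have hz1 : ∑ k' : Fin n, ∑ p ∈ Finset.HasAntidiagonal.antidiagonal d,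
            (MvPowerSeries.coeff (R := LH) p.1 (A a k k')).coeff 0 *
              (MvPowerSeries.coeff (R := LH) p.2 (L k' l)).coeff w' = 0 :=
          Finset.sum_eq_zero fun k' _ => hsplit k'
        have hz2 : ∑ k' : Fin n, (MvPowerSeries.coeff (R := LH) d (L k k')).coeff w' *
            (MvPowerSeries.constantCoeff (R := LH) (A a k' l)).coeff 0 = 0 :=
          Finset.sum_eq_zero fun k' _ => by rw [hzero k k', zero_mul]
        rw [hz1, hz2, add_zero, sub_zero] at h
        have hane : ((d (Sum.inl a) : ℕ) : ℂ) ≠ 0 := Nat.cast_ne_zero.mpr ha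
        exact (mul_eq_zero.mp h).resolve_left hane
      -- upward induction from the support bound
      have main : ∀ w' : ℤ, w' ≤ 0 → ∀ k l : Fin n,
          (MvPowerSeries.coeff (R := LH) d (L k l)).coeff w' = 0 := by
        have step : ∀ w' : ℤ, N - 1 ≤ w' →
            (w' ≤ 0 → ∀ k l : Fin n, (MvPowerSeries.coeff (R := LH) d (L k l)).coeff w' = 0) →
            (w' + 1 ≤ 0 → ∀ k l : Fin n,
              (MvPowerSeries.coeff (R := LH) d (L k l)).coeff (w' + 1) = 0) := by
          intro w' _ hP hw1
          exact hrec w' (by omega) (hP (by omega))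
        have base : (N - 1 : ℤ) ≤ 0 → ∀ k l : Fin n,
            (MvPowerSeries.coeff (R := LH) d (L k l)).coeff (N - 1) = 0 :=
          fun _ k l => hN k l (N - 1) (by omega)
        intro w' hw'
        rcases lt_or_ge w' (N - 1) with hcase | hcase
        · exact fun k l => hN k l w' (by omega)
        · exact Int.le_induction base step w' hcase hw'
      exact main w hw i j
  -- conclude
  intro i j d w hw
  have hsub : MvPowerSeries.coeff (R := LH) d ((L - 1) i j)
      = MvPowerSeries.coeff (R := LH) d (L i j)
        - MvPowerSeries.coeff (R := LH) d ((1 : Matrix (Fin n) (Fin n)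
            (MvPowerSeries (Fin r ⊕ Fin (s + 1)) LH)) i j) := by
    rw [Matrix.sub_apply, map_sub]
  rcases eq_or_ne d 0 with rfl | hd0
  · rw [hsub, hL00]
    have : MvPowerSeries.coeff (R := LH) (0 : (Fin r ⊕ Fin (s + 1)) →₀ ℕ)
        ((1 : Matrix (Fin n) (Fin n) (MvPowerSeries (Fin r ⊕ Fin (s + 1)) LH)) i j)
        = if i = j then (1 : LH) else 0 := by
      rw [Matrix.one_apply]
      split
      · simp [MvPowerSeries.coeff_one]
      · simp
    rw [this, sub_self, HahnSeries.coeff_zero]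
  · rw [hsub]
    have h1 : MvPowerSeries.coeff (R := LH) d
        ((1 : Matrix (Fin n) (Fin n) (MvPowerSeries (Fin r ⊕ Fin (s + 1)) LH)) i j) = 0 := by
      rw [Matrix.one_apply]
      split
      · rw [MvPowerSeries.coeff_one, if_neg hd0]
      · simp
    rw [h1, sub_zero]
    exact KEY (deg d) d rfl hd0 i j w hw
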